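/- Let $m$ be a squarefree positive integer, $K = \mathbb{Q}(\sqrt{-m})$ with ring of integers $\mathcal{O}$, let $p$ be an odd prime, let $v, n$ be nonzero integers and $\epsilon \in \mathcal{O}$. Let $q = 2kp+1$ be a prime (with $k$ a positive integer) such that $q\mathcal{O} = \mathfrak{q}_1\mathfrak{q}_2$ with $\mathfrak{q}_1, \mathfrak{q}_2$ distinct prime ideals, and such that $\mathrm{ord}_{\mathfrak{q}_j}(\epsilon) = 0$ for $j = 1, 2$. Let $\chi(p,q) = \{\eta^p : \eta \in \mathbb{F}_q\}$ and $C(p,q) = \{\zeta \in \chi(p,q) : ((v\zeta + n\sqrt{-m})/\epsilon)^{2k} \equiv 0 \text{ or } 1 \pmod{\mathfrak{q}_j} \text{ for } j = 1, 2\}$. If $C(p,q) = \emptyset$, then there is no integer $\sigma$ and no $\eta \in K$ satisfying $v\sigma^p + n\sqrt{-m} = \epsilon\eta^p$. -/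

import Mathlib

open NumberField

set_option synthInstance.maxHeartbeats 1000000
set_option maxHeartbeats 2000000

lemma residue_step (K : Type) [Field K] [NumberField K]
    (p k q : ℕ) (hq : q.Prime) (hq1 : 2 * k * p = q - 1)
    (𝔮 : Ideal (𝓞 K)) (h𝔮 : 𝔮.IsMaximal)
    (hcard : Nat.card ((𝓞 K) ⧸ 𝔮) = q)
    (w ε a b : 𝓞 K) (hb : b ∉ 𝔮) (hε : ε ∉ 𝔮)
    (hO : w * b ^ p = ε * a ^ p) :
    Ideal.Quotient.mk 𝔮 (w ^ (2 * k)) = 0 ∨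
      Ideal.Quotient.mk 𝔮 (w ^ (2 * k)) = Ideal.Quotient.mk 𝔮 (ε ^ (2 * k)) := by
  haveI : 𝔮.IsPrime := h𝔮.isPrime
  haveI : Finite ((𝓞 K) ⧸ 𝔮) := by
    have : Nat.card ((𝓞 K) ⧸ 𝔮) ≠ 0 := by rw [hcard]; exact hq.ne_zero
    exact (Nat.card_ne_zero.mp this).2
  haveI : Fintype ((𝓞 K) ⧸ 𝔮) := Fintype.ofFinite _
  have hcard' : Fintype.card ((𝓞 K) ⧸ 𝔮) = q := by
    rw [← Nat.card_eq_fintype_card]; exact hcard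
  have hpow : ∀ x : (𝓞 K) ⧸ 𝔮, x ≠ 0 → x ^ (q - 1) = 1 := by
    letI := Ideal.Quotient.field 𝔮
    intro x hx
    rw [← hcard']
    exact FiniteField.pow_card_sub_one_eq_one x hx
  set φ := Ideal.Quotient.mk 𝔮 with hφ
  have hB : φ b ≠ 0 := fun h => hb (Ideal.Quotient.eq_zero_iff_mem.mp h)
  have h1 : φ w * φ b ^ p = φ ε * φ a ^ p := by
    rw [← map_pow, ← map_mul, ← map_pow, ← map_mul, hO]
  have hmain : φ w ^ (2 * k) * φ b ^ (q - 1) = φ ε ^ (2 * k) * φ a ^ (q - 1) := by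
    calc φ w ^ (2 * k) * φ b ^ (q - 1)
        = (φ w * φ b ^ p) ^ (2 * k) := by rw [mul_pow, ← pow_mul, ← hq1]; ring_nf
      _ = (φ ε * φ a ^ p) ^ (2 * k) := by rw [h1]
      _ = φ ε ^ (2 * k) * φ a ^ (q - 1) := by rw [mul_pow, ← pow_mul, ← hq1]; ring_nf
  have hbpow : φ b ^ (q - 1) = 1 := hpow _ hB
  rw [hbpow, mul_one] at hmain
  by_cases hA : φ a = 0
  · left
    rw [map_pow, hmain, hA, zero_pow, mul_zero]
    have := hq.two_le
    omega
  · right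
    have hapow : φ a ^ (q - 1) = 1 := hpow _ hA
    rw [map_pow, hmain, hapow, mul_one, map_pow]

lemma exists_denom (K : Type) [Field K] [NumberField K]
    (p : ℕ) (hp : 0 < p)
    (w ε : 𝓞 K) (η : K)
    (𝔮 : Ideal (𝓞 K)) (h𝔮 : 𝔮.IsMaximal) (h𝔮bot : 𝔮 ≠ ⊥)
    (hε : ε ∉ 𝔮)
    (heq : algebraMap (𝓞 K) K w = algebraMap (𝓞 K) K ε * η ^ p) :
    ∃ a b : 𝓞 K, b ∉ 𝔮 ∧ η * algebraMap (𝓞 K) K b = algebraMap (𝓞 K) K a := by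
  haveI : 𝔮.IsPrime := h𝔮.isPrime
  set R := Localization.AtPrime 𝔮 with hR
  haveI : IsDiscreteValuationRing R :=
    IsLocalization.AtPrime.isDiscreteValuationRing_of_dedekind_domain (𝓞 K) h𝔮bot R
  have hunit : ∀ y : 𝔮.primeCompl, IsUnit (algebraMap (𝓞 K) K y) := by
    intro y
    refine isUnit_iff_ne_zero.mpr ?_
    simp only [ne_eq, RingOfIntegers.coe_eq_zero_iff]
    intro h
    exact y.2 (h ▸ 𝔮.zero_mem)
  letI : Algebra R K := (IsLocalization.lift (S := R) hunit).toAlgebra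
  haveI : IsScalarTower (𝓞 K) R K :=
    IsScalarTower.of_algebraMap_eq fun x => (IsLocalization.lift_eq hunit x).symm
  haveI : IsFractionRing R K :=
    IsFractionRing.isFractionRing_of_isDomain_of_isLocalization 𝔮.primeCompl R K
  obtain ⟨u, hu⟩ := (IsLocalization.AtPrime.isUnit_to_map_iff R 𝔮 ε).mpr hε
  have hεK : (algebraMap (𝓞 K) K ε) ≠ 0 := by
    simp only [ne_eq, RingOfIntegers.coe_eq_zero_iff]
    intro h
    exact hε (h ▸ 𝔮.zero_mem)
  have huK : algebraMap R K (u : R) = algebraMap (𝓞 K) K ε := by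
    rw [hu, ← IsScalarTower.algebraMap_apply]
  have huinv : algebraMap R K ((u⁻¹ : Rˣ) : R) = (algebraMap (𝓞 K) K ε)⁻¹ := by
    apply eq_inv_of_mul_eq_one_left
    rw [← huK, ← map_mul, ← Units.val_mul, inv_mul_cancel, Units.val_one, map_one]
  set c : R := ((u⁻¹ : Rˣ) : R) * algebraMap (𝓞 K) R w with hcdef
  have hc : algebraMap R K c = η ^ p := by
    rw [hcdef, map_mul, huinv, ← IsScalarTower.algebraMap_apply, heq,
      inv_mul_cancel_left₀ hεK]
  have hint : IsIntegral R (η ^ p) := by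
    rw [← hc]; exact isIntegral_algebraMap
  obtain ⟨y, hy⟩ := IsIntegrallyClosed.exists_algebraMap_eq_of_isIntegral_pow hp hint
  obtain ⟨⟨a, b⟩, hab⟩ := IsLocalization.surj 𝔮.primeCompl y
  refine ⟨a, b, b.2, ?_⟩
  have := congrArg (algebraMap R K) hab
  rwa [map_mul, hy, ← IsScalarTower.algebraMap_apply, ← IsScalarTower.algebraMap_apply] at this

lemma combined_step (K : Type) [Field K] [NumberField K]
    (p k q : ℕ) (hq : q.Prime) (hq1 : 2 * k * p = q - 1) (hp : 0 < p)
    (v n σ : ℤ) (s ε : 𝓞 K) (η : K)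
    (𝔮 : Ideal (𝓞 K)) (h𝔮 : 𝔮.IsMaximal)
    (hqmem : (q : 𝓞 K) ∈ 𝔮) (hcard : Nat.card ((𝓞 K) ⧸ 𝔮) = q)
    (hε : ε ∉ 𝔮)
    (heq : (v : K) * (σ : K) ^ p + (n : K) * (s : K) = (ε : K) * η ^ p) :
    Ideal.Quotient.mk 𝔮
        (((v : 𝓞 K) * ((((σ : ZMod q) ^ p).val : ℕ) : 𝓞 K) + (n : 𝓞 K) * s) ^ (2 * k)) = 0 ∨
    Ideal.Quotient.mk 𝔮
        (((v : 𝓞 K) * ((((σ : ZMod q) ^ p).val : ℕ) : 𝓞 K) + (n : 𝓞 K) * s) ^ (2 * k)) =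
      Ideal.Quotient.mk 𝔮 (ε ^ (2 * k)) := by
  have hqO : (q : 𝓞 K) ≠ 0 := Nat.cast_ne_zero.mpr hq.ne_zero
  have h𝔮bot : 𝔮 ≠ ⊥ := by
    rintro rfl
    exact hqO (Ideal.mem_bot.mp hqmem)
  set w : 𝓞 K := (v : 𝓞 K) * (σ : 𝓞 K) ^ p + (n : 𝓞 K) * s with hw
  have hwK : algebraMap (𝓞 K) K w = (v : K) * (σ : K) ^ p + (n : K) * (s : K) := by
    simp [hw]
  have heqw : algebraMap (𝓞 K) K w = algebraMap (𝓞 K) K ε * η ^ p := by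
    rw [hwK]; exact heq
  obtain ⟨a, b, hb, hab⟩ := exists_denom K p hp w ε η 𝔮 h𝔮 h𝔮bot hε heqw
  have hO : w * b ^ p = ε * a ^ p := by
    apply RingOfIntegers.coe_injective
    rw [map_mul, map_pow, map_mul, map_pow, heqw, ← hab, mul_pow]
    ring
  have hres := residue_step K p k q hq hq1 𝔮 h𝔮 hcard w ε a b hb hε hO
  -- relate the ZMod-value to σ^p modulo 𝔮
  haveI : NeZero q := ⟨hq.ne_zero⟩
  have hzv : Ideal.Quotient.mk 𝔮 ((((σ : ZMod q) ^ p).val : 𝓞 K)) =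
      Ideal.Quotient.mk 𝔮 ((σ : 𝓞 K) ^ p) := by
    rw [Ideal.Quotient.eq]
    have hdvd : (q : ℤ) ∣ ((((σ : ZMod q) ^ p).val : ℤ) - σ ^ p) := by
      have h2 : (((((σ : ZMod q) ^ p).val : ℤ)) : ZMod q) = ((σ ^ p : ℤ) : ZMod q) := by
        push_cast
        rw [ZMod.natCast_val, ZMod.cast_id]
      rw [ZMod.intCast_eq_intCast_iff] at h2
      exact Int.ModEq.dvd h2.symm
    obtain ⟨t, ht⟩ := hdvd
    have h3 : ((((σ : ZMod q) ^ p).val : 𝓞 K)) - (σ : 𝓞 K) ^ p = (q : 𝓞 K) * (t : 𝓞 K) := by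
      have h4 := congrArg (fun z : ℤ => (z : 𝓞 K)) ht
      push_cast at h4 ⊢
      linear_combination h4
    rw [h3]
    exact Ideal.mul_mem_right _ _ hqmem
  have hgoal : Ideal.Quotient.mk 𝔮
      ((v : 𝓞 K) * ((((σ : ZMod q) ^ p).val : ℕ) : 𝓞 K) + (n : 𝓞 K) * s) =
      Ideal.Quotient.mk 𝔮 w := by
    simp only [hw, map_add, map_mul, hzv]
  rcases hres with h | h
  · left; rw [map_pow, hgoal, ← map_pow, h]
  · right; rw [map_pow, hgoal, ← map_pow, h]

theorem further_descent_criterion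
    (m : ℕ) (hm : 0 < m) (hmsq : Squarefree m)
    (K : Type) [Field K] [NumberField K] (hdeg : Module.finrank ℚ K = 2)
    (s : NumberField.RingOfIntegers K) (hs : s ^ 2 = -(m : NumberField.RingOfIntegers K))
    (p : ℕ) (hp : p.Prime) (hpodd : Odd p)
    (k : ℕ) (hk : 0 < k) (q : ℕ) (hq : q.Prime) (hqform : q = 2 * k * p + 1)
    (v n : ℤ) (hv : v ≠ 0) (hn : n ≠ 0)
    (ε : NumberField.RingOfIntegers K)
    (𝔮₁ 𝔮₂ : Ideal (NumberField.RingOfIntegers K))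
    (h𝔮₁ : 𝔮₁.IsMaximal) (h𝔮₂ : 𝔮₂.IsMaximal) (hne : 𝔮₁ ≠ 𝔮₂)
    (hsplit : Ideal.span {(q : NumberField.RingOfIntegers K)} = 𝔮₁ * 𝔮₂)
    (hε₁ : ε ∉ 𝔮₁) (hε₂ : ε ∉ 𝔮₂)
    (hC : {ζ : ZMod q | (∃ η : ZMod q, ζ = η ^ p) ∧
        ∀ 𝔮 ∈ ({𝔮₁, 𝔮₂} : Set (Ideal (NumberField.RingOfIntegers K))),
          Ideal.Quotient.mk 𝔮
              (((v : NumberField.RingOfIntegers K) * ((ζ.val : ℕ) : NumberField.RingOfIntegers K) +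
                (n : NumberField.RingOfIntegers K) * s) ^ (2 * k)) = 0 ∨
          Ideal.Quotient.mk 𝔮
              (((v : NumberField.RingOfIntegers K) * ((ζ.val : ℕ) : NumberField.RingOfIntegers K) +
                (n : NumberField.RingOfIntegers K) * s) ^ (2 * k)) =
            Ideal.Quotient.mk 𝔮 (ε ^ (2 * k))} = ∅) :
    ¬ ∃ (σ : ℤ) (η : K),
      (v : K) * (σ : K) ^ p + (n : K) * (s : K) = (ε : K) * η ^ p := by
  rintro ⟨σ, η, heq⟩
  -- membership of q in each prime
  have hqmem : (q : 𝓞 K) ∈ 𝔮₁ * 𝔮₂ := by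
    rw [← hsplit]
    exact Ideal.mem_span_singleton_self _
  have hqmem₁ : (q : 𝓞 K) ∈ 𝔮₁ := Ideal.mul_le_left hqmem
  have hqmem₂ : (q : 𝓞 K) ∈ 𝔮₂ := Ideal.mul_le_right hqmem
  -- norm computation
  have hq2 : Ideal.absNorm (Ideal.span {(q : 𝓞 K)}) = q ^ 2 := by
    rw [Ideal.absNorm_span_singleton]
    have h1 : (q : 𝓞 K) = algebraMap ℤ (𝓞 K) (q : ℤ) := by simp
    rw [h1, Algebra.norm_algebraMap_of_basis (Module.Free.chooseBasis ℤ (𝓞 K))]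
    have h2 : Fintype.card (Module.Free.ChooseBasisIndex ℤ (𝓞 K)) = 2 := by
      rw [← Module.finrank_eq_card_chooseBasisIndex, NumberField.RingOfIntegers.rank, hdeg]
    rw [h2]
    simp [Int.natAbs_pow]
  have hprod : Ideal.absNorm 𝔮₁ * Ideal.absNorm 𝔮₂ = q ^ 2 := by
    rw [← _root_.map_mul, ← hsplit, hq2]
  have hne1 : Ideal.absNorm 𝔮₁ ≠ 1 := fun h => h𝔮₁.ne_top (Ideal.absNorm_eq_one_iff.mp h)
  have hne2 : Ideal.absNorm 𝔮₂ ≠ 1 := fun h => h𝔮₂.ne_top (Ideal.absNorm_eq_one_iff.mp h)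
  have hnormq : ∀ a b : ℕ, a * b = q ^ 2 → a ≠ 1 → b ≠ 1 → a = q := by
    intro a b hab ha hb
    have hdvd : a ∣ q ^ 2 := ⟨b, hab.symm⟩
    obtain ⟨i, hi, rfl⟩ := (Nat.dvd_prime_pow hq).mp hdvd
    interval_cases i
    · simp at ha
    · rw [pow_one]
    · exact absurd (Nat.eq_of_mul_eq_mul_left (pow_pos hq.pos 2)
        (by rw [mul_one]; exact hab)) hb
  have hN1 : Ideal.absNorm 𝔮₁ = q := hnormq _ _ hprod hne1 hne2
  have hN2 : Ideal.absNorm 𝔮₂ = q := by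
    have := hprod
    rw [hN1] at this
    have hq0 : 0 < q := hq.pos
    have : Ideal.absNorm 𝔮₂ * q = q * q := by rw [mul_comm] at this ⊢; nlinarith [this]
    exact Nat.eq_of_mul_eq_mul_right hq0 this
  have hcard1 : Nat.card ((𝓞 K) ⧸ 𝔮₁) = q := by
    rw [← Submodule.cardQuot_apply, ← Ideal.absNorm_apply, hN1]
  have hcard2 : Nat.card ((𝓞 K) ⧸ 𝔮₂) = q := by
    rw [← Submodule.cardQuot_apply, ← Ideal.absNorm_apply, hN2]
  have hq1 : 2 * k * p = q - 1 := by omega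
  have hp0 : 0 < p := hp.pos
  -- the element ζ = σ^p in ZMod q lies in the set, contradiction
  rw [Set.eq_empty_iff_forall_notMem] at hC
  apply hC ((σ : ZMod q) ^ p)
  refine ⟨⟨(σ : ZMod q), rfl⟩, ?_⟩
  intro 𝔮 h𝔮mem
  simp only [Set.mem_insert_iff, Set.mem_singleton_iff] at h𝔮mem
  rcases h𝔮mem with rfl | rfl
  · exact combined_step K p k q hq hq1 hp0 v n σ s ε η 𝔮 h𝔮₁ hqmem₁ hcard1 hε₁ heq
  · exact combined_step K p k q hq hq1 hp0 v n σ s ε η 𝔮 h𝔮₂ hqmem₂ hcard2 hε₂ heq
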